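/- Suppose some S_i contains two distinct elements a and b. Let (S_i', m_i') be the multiset obtained from (S_i, m_i) by decreasing the multiplicity of a by one (removing a if its multiplicity becomes 0), and (S_i'', m_i'') the one obtained by decreasing the multiplicity of b by one; let S' and S'' be the product multiset systems in which S_i is replaced by S_i' and S_i'' respectively, the other factors unchanged. Then for every f ∈ F[x_1,...,x_n], f[S] = (f[S'] − f[S''])/(b − a). -/

import Mathlib

open MvPolynomial

/-- The Taylor coefficient `f_u(s)`: the coefficient of `x^u` in `f(x + s)`. -/
noncomputable def taylorCoeff {F : Type*} [Field F] {n : ℕ}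
    (f : MvPolynomial (Fin n) F) (s : Fin n → F) (u : Fin n →₀ ℕ) : F :=
  coeff u (aeval (fun i => X i + C (s i)) f)

/-- Membership in the ideal `I(s, w)`: all Taylor coefficients `f_u(s)` with
`u < w` (componentwise) vanish. -/
def memPointIdeal {F : Type*} [Field F] {n : ℕ}
    (f : MvPolynomial (Fin n) F) (s : Fin n → F) (w : Fin n → ℕ) : Prop :=
  ∀ u : Fin n →₀ ℕ, (∀ i, u i < w i) → taylorCoeff f s u = 0

/-- The polynomial `g_i(x_i) = ∏_{s ∈ S_i} (x_i - s)^{m_i(s)}`. -/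
noncomputable def gPoly {F : Type*} [Field F] {n : ℕ}
    (S : Fin n → Finset F) (m : Fin n → F → ℕ) (i : Fin n) : MvPolynomial (Fin n) F :=
  ∏ s ∈ S i, (X i - C s) ^ m i s

/-- The size `d_i = Σ_{s ∈ S_i} m_i(s)` of the multiset `(S_i, m_i)`. -/
def dSize {F : Type*} {n : ℕ} (S : Fin n → Finset F) (m : Fin n → F → ℕ) (i : Fin n) : ℕ :=
  ∑ s ∈ S i, m i s
/-- The univariate model of `gPoly`. -/
noncomputable def qPoly {F : Type*} [Field F] (T : Finset F) (mm : F → ℕ) : Polynomial F :=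
  ∏ s ∈ T, (Polynomial.X - Polynomial.C s) ^ mm s

lemma qPoly_monic {F : Type*} [Field F] (T : Finset F) (mm : F → ℕ) : (qPoly T mm).Monic :=
  Polynomial.monic_prod_of_monic _ _ fun s _ => (Polynomial.monic_X_sub_C s).pow _

lemma qPoly_natDegree {F : Type*} [Field F] (T : Finset F) (mm : F → ℕ) :
    (qPoly T mm).natDegree = ∑ s ∈ T, mm s := by
  rw [qPoly, Polynomial.natDegree_prod_of_monic _ _
    (fun s _ => (Polynomial.monic_X_sub_C s).pow _)]
  refine Finset.sum_congr rfl fun s _ => ?_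
  rw [Polynomial.natDegree_pow, Polynomial.natDegree_X_sub_C, mul_one]

lemma gPoly_eq_aeval {F : Type*} [Field F] {n : ℕ}
    (S : Fin n → Finset F) (m : Fin n → F → ℕ) (i : Fin n) :
    gPoly S m i = Polynomial.aeval (X i) (qPoly (S i) (m i)) := by
  rw [gPoly, qPoly, map_prod]
  refine Finset.prod_congr rfl fun s _ => ?_
  rw [map_pow, map_sub, Polynomial.aeval_X, Polynomial.aeval_C, algebraMap_eq]
lemma aeval_X_poly {F A : Type*} [CommSemiring F] [CommSemiring A] [Algebra F A]
    (q : Polynomial F) :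
    Polynomial.aeval (Polynomial.X : Polynomial A) q = q.map (algebraMap F A) := by
  have : (Polynomial.aeval (Polynomial.X : Polynomial A) : Polynomial F →ₐ[F] Polynomial A) =
      Polynomial.mapAlgHom (Algebra.ofId F A) := Polynomial.algHom_ext (by simp)
  rw [this]; rfl

lemma aeval_C_poly {F A : Type*} [CommSemiring F] [CommSemiring A] [Algebra F A]
    (x : A) (q : Polynomial F) :
    Polynomial.aeval (Polynomial.C x) q = Polynomial.C (Polynomial.aeval x q) := by
  rw [show (Polynomial.C x) = Polynomial.CAlgHom (R := F) x from rfl,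
    Polynomial.aeval_algHom_apply]
  rfl

lemma span_monic_eq_zero {F : Type*} [Field F] :
    ∀ (n : ℕ) (q : Fin n → Polynomial F), (∀ i, (q i).Monic) →
    ∀ p : MvPolynomial (Fin n) F,
      p ∈ Ideal.span (Set.range fun i => Polynomial.aeval (X i) (q i)) →
      (∀ i, p.degreeOf i < (q i).natDegree) → p = 0 := by
  intro n
  induction n with
  | zero =>
      intro q hq p hp hd
      rw [Set.range_eq_empty, Ideal.span_empty] at hp
      simpa using hp
  | succ n ih =>
      intro q hq p hp hd
      set R := MvPolynomial (Fin n) F with hR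
      set g' : Fin n → R := fun i => Polynomial.aeval (X i) (q i.succ) with hg'
      set I : Ideal R := Ideal.span (Set.range g') with hI
      set π : R →+* R ⧸ I := Ideal.Quotient.mk I with hπ
      set ψ : Polynomial R →+* Polynomial (R ⧸ I) := Polynomial.mapRingHom π with hψ
      set G : Polynomial (R ⧸ I) := (q 0).map (π.comp (algebraMap F R)) with hG
      have hGmonic : G.Monic := (hq 0).map _
      -- image of p lies in span {G}
      have step1 : ψ (finSuccEquiv F n p) ∈ Ideal.span {G} := by
        have h1 : finSuccEquiv F n p ∈ Ideal.span
            ((finSuccEquiv F n : MvPolynomial (Fin (n+1)) F →+* Polynomial R) ''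
            (Set.range fun i => Polynomial.aeval (X i) (q i))) := by
          rw [← Ideal.map_span]
          exact Ideal.mem_map_of_mem _ hp
        have h2 : ψ (finSuccEquiv F n p) ∈ Ideal.span (ψ ''
            ((finSuccEquiv F n : MvPolynomial (Fin (n+1)) F →+* Polynomial R) ''
            (Set.range fun i => Polynomial.aeval (X i) (q i)))) := by
          rw [← Ideal.map_span]
          exact Ideal.mem_map_of_mem _ h1
        refine Ideal.span_le.mpr ?_ h2
        rintro x ⟨y, ⟨z, ⟨i, rfl⟩, rfl⟩, rfl⟩
        simp only [SetLike.mem_coe]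
        induction i using Fin.cases with
        | zero =>
            have e1 : finSuccEquiv F n (Polynomial.aeval (X 0) (q 0)) =
                Polynomial.aeval (Polynomial.X : Polynomial R) (q 0) := by
              rw [← Polynomial.aeval_algHom_apply (finSuccEquiv F n) (X 0) (q 0),
                finSuccEquiv_X_zero]
            have e2 : ψ (finSuccEquiv F n (Polynomial.aeval (X 0) (q 0))) = G := by
              rw [e1, aeval_X_poly, hψ, hG]
              simp [Polynomial.map_map]
            show ψ ((finSuccEquiv F n) (Polynomial.aeval (X 0) (q 0))) ∈ Ideal.span {G}
            rw [e2]
            exact Ideal.subset_span rfl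
        | succ i =>
            have e1 : finSuccEquiv F n (Polynomial.aeval (X i.succ) (q i.succ)) =
                Polynomial.C (g' i) := by
              rw [← Polynomial.aeval_algHom_apply (finSuccEquiv F n) (X i.succ) (q i.succ),
                finSuccEquiv_X_succ, aeval_C_poly]
            have e2 : ψ (finSuccEquiv F n (Polynomial.aeval (X i.succ) (q i.succ))) = 0 := by
              rw [e1]
              have hz : π (g' i) = 0 := by
                rw [hπ, Ideal.Quotient.eq_zero_iff_mem]
                exact Ideal.subset_span ⟨i, rfl⟩
              simp [hψ, hz]
            show ψ ((finSuccEquiv F n) (Polynomial.aeval (X i.succ) (q i.succ))) ∈ Ideal.span {G}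
            rw [e2]
            exact Ideal.zero_mem _
      -- hence ψ (Φ p) = 0
      have step2 : ψ (finSuccEquiv F n p) = 0 := by
        rcases subsingleton_or_nontrivial (R ⧸ I) with hss | hnt
        · exact Subsingleton.elim _ _
        · obtain ⟨t, ht⟩ := (Ideal.mem_span_singleton (α := Polynomial (R ⧸ I))).mp step1
          by_cases htz : t = 0
          · rw [ht, htz, mul_zero]
          · exfalso
            have hdeg : (ψ (finSuccEquiv F n p)).natDegree ≤ (finSuccEquiv F n p).natDegree :=
              Polynomial.natDegree_map_le
            have hdeg2 : (finSuccEquiv F n p).natDegree = degreeOf 0 p := natDegree_finSuccEquiv p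
            have hdegG : G.natDegree = (q 0).natDegree := (hq 0).natDegree_map _
            have hmul : (G * t).natDegree = G.natDegree + t.natDegree :=
              Polynomial.natDegree_mul' (by
                rw [hGmonic.leadingCoeff, one_mul]
                exact Polynomial.leadingCoeff_ne_zero.mpr htz)
            rw [ht] at hdeg
            have hlt := hd 0
            omega
      -- coefficients vanish
      have hcoeff : ∀ k, (finSuccEquiv F n p).coeff k = 0 := by
        intro k
        have h0 : π ((finSuccEquiv F n p).coeff k) = 0 := by
          have h' : (ψ (finSuccEquiv F n p)).coeff k = 0 := by
            rw [step2, Polynomial.coeff_zero]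
          rw [hψ, Polynomial.coe_mapRingHom, Polynomial.coeff_map] at h'
          exact h'
        have hmem : (finSuccEquiv F n p).coeff k ∈ I := by
          rwa [hπ, Ideal.Quotient.eq_zero_iff_mem] at h0
        exact ih (fun i => q i.succ) (fun i => hq _) _ hmem
          (fun j => lt_of_le_of_lt (degreeOf_coeff_finSuccEquiv p j k) (hd j.succ))
      have hz : finSuccEquiv F n p = 0 := Polynomial.ext fun k => by
        rw [hcoeff]; simp
      have := congrArg (finSuccEquiv F n).symm hz
      simpa using this

lemma remainder_unique {F : Type*} [Field F] {n : ℕ} (S : Fin n → Finset F)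
    (m : Fin n → F → ℕ) (p : MvPolynomial (Fin n) F)
    (hp : p ∈ Ideal.span (Set.range (gPoly S m)))
    (hd : ∀ i, p.degreeOf i < dSize S m i) : p = 0 := by
  have hfe : (fun i => Polynomial.aeval (X i) (qPoly (S i) (m i))) = gPoly S m :=
    funext fun i => (gPoly_eq_aeval S m i).symm
  refine span_monic_eq_zero n (fun i => qPoly (S i) (m i)) (fun i => qPoly_monic _ _) p ?_ ?_
  · rw [hfe]; exact hp
  · intro i; rw [qPoly_natDegree]; exact hd i

section Decr
variable {F : Type*} [Field F] [DecidableEq F] {n : ℕ} (S : Fin n → Finset F)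
  (m md : Fin n → F → ℕ) (i₀ : Fin n) (a : F)

lemma gPoly_decr (ha : a ∈ S i₀) (hma : 1 ≤ m i₀ a)
    (hdec : ∀ i s, md i s = if i = i₀ ∧ s = a then m i s - 1 else m i s) :
    gPoly S m i₀ = (X i₀ - C a) * gPoly S md i₀ := by
  unfold gPoly
  rw [← Finset.mul_prod_erase _ _ ha,
    ← Finset.mul_prod_erase _ (fun s => (X i₀ - C s : MvPolynomial (Fin n) F) ^ md i₀ s) ha]
  have h1 : ∏ s ∈ (S i₀).erase a, (X i₀ - C s : MvPolynomial (Fin n) F) ^ md i₀ s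
      = ∏ s ∈ (S i₀).erase a, (X i₀ - C s) ^ m i₀ s :=
    Finset.prod_congr rfl fun s hs => by
      rw [hdec]
      simp [Finset.ne_of_mem_erase hs]
  rw [h1, ← mul_assoc]
  have h2 : md i₀ a = m i₀ a - 1 := by rw [hdec]; simp
  rw [h2]
  congr 1
  conv_lhs => rw [show m i₀ a = (m i₀ a - 1) + 1 from by omega]
  rw [pow_succ]
  ring

lemma gPoly_decr_ne (hdec : ∀ i s, md i s = if i = i₀ ∧ s = a then m i s - 1 else m i s)
    {j : Fin n} (hj : j ≠ i₀) : gPoly S md j = gPoly S m j :=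
  Finset.prod_congr rfl fun s _ => by rw [hdec]; simp [hj]

lemma dSize_decr (ha : a ∈ S i₀) (hma : 1 ≤ m i₀ a)
    (hdec : ∀ i s, md i s = if i = i₀ ∧ s = a then m i s - 1 else m i s) :
    dSize S md i₀ + 1 = dSize S m i₀ := by
  unfold dSize
  rw [← Finset.add_sum_erase _ _ ha, ← Finset.add_sum_erase _ (m i₀) ha]
  have h1 : ∑ s ∈ (S i₀).erase a, md i₀ s = ∑ s ∈ (S i₀).erase a, m i₀ s :=
    Finset.sum_congr rfl fun s hs => by
      rw [hdec]; simp [Finset.ne_of_mem_erase hs]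
  have h2 : md i₀ a = m i₀ a - 1 := by rw [hdec]; simp
  omega

lemma dSize_decr_ne (hdec : ∀ i s, md i s = if i = i₀ ∧ s = a then m i s - 1 else m i s)
    {j : Fin n} (hj : j ≠ i₀) : dSize S md j = dSize S m j :=
  Finset.sum_congr rfl fun s _ => by rw [hdec]; simp [hj]

lemma mul_mem_decr (ha : a ∈ S i₀) (hma : 1 ≤ m i₀ a)
    (hdec : ∀ i s, md i s = if i = i₀ ∧ s = a then m i s - 1 else m i s)
    (p : MvPolynomial (Fin n) F) (hp : p ∈ Ideal.span (Set.range (gPoly S md))) :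
    (X i₀ - C a) * p ∈ Ideal.span (Set.range (gPoly S m)) := by
  have h1 : (X i₀ - C a) * p ∈
      Ideal.span {(X i₀ - C a : MvPolynomial (Fin n) F)} * Ideal.span (Set.range (gPoly S md)) :=
    Ideal.mul_mem_mul (Ideal.subset_span rfl) hp
  rw [Ideal.span_mul_span'] at h1
  refine Ideal.span_le.mpr ?_ h1
  rintro x ⟨u, hu, v, ⟨j, rfl⟩, rfl⟩
  obtain rfl : u = X i₀ - C a := hu
  simp only [SetLike.mem_coe]
  by_cases hj : j = i₀
  · subst hj
    rw [← gPoly_decr S m md j a ha hma hdec]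
    exact Ideal.subset_span ⟨j, rfl⟩
  · rw [gPoly_decr_ne S m md i₀ a hdec hj]
    exact Ideal.mul_mem_left _ _ (Ideal.subset_span ⟨j, rfl⟩)

lemma degXC (i j : Fin n) (c : F) :
    degreeOf i (X j - C c : MvPolynomial (Fin n) F) ≤ if i = j then 1 else 0 := by
  refine le_trans (degreeOf_sub_le _ _ _) ?_
  rw [degreeOf_X, degreeOf_C]
  simp

end Decr
/-- The divided-difference recurrence: if `a ≠ b` both lie in `S_{i₀}`, and `m'`
(resp. `m''`) decreases the multiplicity of `a` (resp. `b`) at index `i₀` by one,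
then `f[S] = (f[S'] - f[S''])/(b - a)`, where `f[·]` denotes the coefficient of
`x_1^{d_1 - 1} ⋯ x_n^{d_n - 1}` in the corresponding remainder `f mod (g_1, …, g_n)`. -/
theorem stmt_12 {F : Type*} [Field F] [DecidableEq F] {n : ℕ} (hn : 1 ≤ n)
    (S : Fin n → Finset F) (hS : ∀ i, (S i).Nonempty)
    (m : Fin n → F → ℕ) (hm : ∀ i, ∀ s ∈ S i, 1 ≤ m i s)
    (i₀ : Fin n) (a b : F) (ha : a ∈ S i₀) (hb : b ∈ S i₀) (hab : a ≠ b)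
    (m' m'' : Fin n → F → ℕ)
    (hm' : ∀ i s, m' i s = if i = i₀ ∧ s = a then m i s - 1 else m i s)
    (hm'' : ∀ i s, m'' i s = if i = i₀ ∧ s = b then m i s - 1 else m i s)
    (f r r' r'' : MvPolynomial (Fin n) F)
    (hr : ∀ i, r.degreeOf i < dSize S m i)
    (hfr : f - r ∈ Ideal.span (Set.range (gPoly S m)))
    (hr' : ∀ i, r'.degreeOf i < dSize S m' i)
    (hfr' : f - r' ∈ Ideal.span (Set.range (gPoly S m')))
    (hr'' : ∀ i, r''.degreeOf i < dSize S m'' i)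
    (hfr'' : f - r'' ∈ Ideal.span (Set.range (gPoly S m''))) :
    coeff (Finsupp.equivFunOnFinite.symm fun i => dSize S m i - 1) r =
      (coeff (Finsupp.equivFunOnFinite.symm fun i => dSize S m' i - 1) r' -
        coeff (Finsupp.equivFunOnFinite.symm fun i => dSize S m'' i - 1) r'') /
        (b - a) := by
  have hma := hm i₀ a ha
  have hmb := hm i₀ b hb
  have hba : b - a ≠ 0 := sub_ne_zero_of_ne (Ne.symm hab)
  set c : F := (b - a)⁻¹ with hc
  have hb2 : (2 : ℕ) ≤ dSize S m i₀ := by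
    have hsub : ({a, b} : Finset F) ⊆ S i₀ := by
      intro x hx
      rcases Finset.mem_insert.mp hx with h | h
      · exact h ▸ ha
      · exact (Finset.mem_singleton.mp h) ▸ hb
    calc (2 : ℕ) = 1 + 1 := rfl
      _ ≤ m i₀ a + m i₀ b := add_le_add hma hmb
      _ = ∑ s ∈ ({a, b} : Finset F), m i₀ s := (Finset.sum_pair hab).symm
      _ ≤ dSize S m i₀ := Finset.sum_le_sum_of_subset hsub
  have hd' : dSize S m' i₀ + 1 = dSize S m i₀ := dSize_decr S m m' i₀ a ha hma hm'
  have hd'' : dSize S m'' i₀ + 1 = dSize S m i₀ := dSize_decr S m m'' i₀ b hb hmb hm''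
  have hdne' : ∀ j, j ≠ i₀ → dSize S m' j = dSize S m j :=
    fun j hj => dSize_decr_ne S m m' i₀ a hm' hj
  have hdne'' : ∀ j, j ≠ i₀ → dSize S m'' j = dSize S m j :=
    fun j hj => dSize_decr_ne S m m'' i₀ b hm'' hj
  have h1 : (C c : MvPolynomial (Fin n) F) * (C b - C a) = 1 := by
    rw [← C_sub, ← C_mul, hc, inv_mul_cancel₀ hba, C_1]
  -- membership of the difference
  have hmem : r - C c * ((X i₀ - C a) * r' - (X i₀ - C b) * r'')
      ∈ Ideal.span (Set.range (gPoly S m)) := by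
    have e : r - C c * ((X i₀ - C a) * r' - (X i₀ - C b) * r'') =
        -(f - r) + C c * ((X i₀ - C a) * (f - r') - (X i₀ - C b) * (f - r'')) := by
      linear_combination (-f) * h1
    rw [e]
    refine Ideal.add_mem _ (neg_mem hfr)
      (Ideal.mul_mem_left _ _ (Ideal.sub_mem _ ?_ ?_))
    · exact mul_mem_decr S m m' i₀ a ha hma hm' _ hfr'
    · exact mul_mem_decr S m m'' i₀ b hb hmb hm'' _ hfr''
  -- degree bounds
  have hdeg : ∀ i, degreeOf i (r - C c * ((X i₀ - C a) * r' - (X i₀ - C b) * r''))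
      < dSize S m i := by
    intro i
    have b1 : degreeOf i ((X i₀ - C a) * r') ≤ (if i = i₀ then 1 else 0) + degreeOf i r' :=
      (degreeOf_mul_le _ _ _).trans (add_le_add_left (degXC _ _ _) _)
    have b2 : degreeOf i ((X i₀ - C b) * r'') ≤ (if i = i₀ then 1 else 0) + degreeOf i r'' :=
      (degreeOf_mul_le _ _ _).trans (add_le_add_left (degXC _ _ _) _)
    have b3 : degreeOf i (C c * ((X i₀ - C a) * r' - (X i₀ - C b) * r'')) ≤
        max ((if i = i₀ then 1 else 0) + degreeOf i r')
            ((if i = i₀ then 1 else 0) + degreeOf i r'') := by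
      refine (degreeOf_mul_le _ _ _).trans ?_
      rw [degreeOf_C, zero_add]
      exact (degreeOf_sub_le _ _ _).trans (max_le_max b1 b2)
    refine (degreeOf_sub_le _ _ _).trans_lt (max_lt (hr i) (b3.trans_lt ?_))
    have hr'i := hr' i
    have hr''i := hr'' i
    by_cases hi : i = i₀
    · subst hi
      rw [if_pos rfl]
      exact max_lt (by omega) (by omega)
    · rw [if_neg hi, zero_add, zero_add]
      have e1 := hdne' i hi
      have e2 := hdne'' i hi
      exact max_lt (by omega) (by omega)
  have hr_eq : r = C c * ((X i₀ - C a) * r' - (X i₀ - C b) * r'') :=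
    sub_eq_zero.mp (remainder_unique S m _ hmem hdeg)
  -- coefficient computation
  set u : Fin n →₀ ℕ := Finsupp.equivFunOnFinite.symm fun i => dSize S m i - 1 with hu
  set u' : Fin n →₀ ℕ := Finsupp.equivFunOnFinite.symm fun i => dSize S m' i - 1 with hu'
  set u'' : Fin n →₀ ℕ := Finsupp.equivFunOnFinite.symm fun i => dSize S m'' i - 1 with hu''
  have hsplit' : u = Finsupp.single i₀ 1 + u' := by
    ext i
    rw [Finsupp.add_apply, Finsupp.single_apply, hu, hu']
    simp only [Finsupp.coe_equivFunOnFinite_symm]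
    by_cases hi : i₀ = i
    · subst hi
      rw [if_pos rfl]
      omega
    · rw [if_neg hi, hdne' i (fun h => hi h.symm)]
      omega
  have hsplit'' : u = Finsupp.single i₀ 1 + u'' := by
    ext i
    rw [Finsupp.add_apply, Finsupp.single_apply, hu, hu'']
    simp only [Finsupp.coe_equivFunOnFinite_symm]
    by_cases hi : i₀ = i
    · subst hi
      rw [if_pos rfl]
      omega
    · rw [if_neg hi, hdne'' i (fun h => hi h.symm)]
      omega
  have hui₀ : u i₀ = dSize S m i₀ - 1 := by
    rw [hu]; simp only [Finsupp.coe_equivFunOnFinite_symm]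
  have hcr'0 : coeff u r' = 0 := by
    by_contra hne
    have := monomial_le_degreeOf i₀ (mem_support_iff.mpr hne)
    have h3 := hr' i₀
    omega
  have hcr''0 : coeff u r'' = 0 := by
    by_contra hne
    have := monomial_le_degreeOf i₀ (mem_support_iff.mpr hne)
    have h3 := hr'' i₀
    omega
  have hXa : coeff u (X i₀ * r') = coeff u' r' := by
    rw [hsplit', coeff_X_mul]
  have hXb : coeff u (X i₀ * r'') = coeff u'' r'' := by
    rw [hsplit'', coeff_X_mul]
  have hfinal : coeff u r = c * (coeff u' r' - coeff u'' r'') := by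
    rw [hr_eq, coeff_C_mul, coeff_sub, sub_mul, sub_mul, coeff_sub, coeff_sub, hXa, hXb,
      coeff_C_mul, coeff_C_mul, hcr'0, hcr''0]
    ring
  rw [hfinal, hc, div_eq_mul_inv, mul_comm]
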